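/- Let m ≥ 1 be an integer, β ∈ ℝ, and let Q : (0,∞) → B(L²(ℝⁿ)) be a family of bounded linear operators such that (t Q_t)_{t>0} satisfies off-diagonal estimates of order M ≥ 1 with homogeneity m and constant C₀. Then there exists C > 0 (depending only on n, m, M, β, C₀) such that for every compactly supported continuous f : (0,∞) × ℝⁿ → ℂ, every x ∈ ℝⁿ and every integer j ≥ 1: ∫₀^∞ ∫_{B(x, t^{1/m})} | ∫_{t/2}^t Q_{t−s}(1_{C_j(x, 4s^{1/m})} f(s,·))(y) ds |² t^{β − n/m} dy dt ≤ C · 2^{−2jmM} ∫₀^∞ ‖1_{B(x, 2^{j+2} s^{1/m})} f(s,·)‖²_{L²(ℝⁿ)} s^{β − n/m} ds. -/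

import Mathlib

open MeasureTheory Metric Set
open scoped ENNReal NNReal

noncomputable section

attribute [local instance] Classical.propDecidable

abbrev Rn (n : ℕ) := EuclideanSpace ℝ (Fin n)
abbrev L2 (n : ℕ) : Type := Lp ℂ 2 (volume : Measure (Rn n))

/-- The element of `L²(ℝⁿ)` represented by a function (zero if not in `L²`). -/
def toL2 {n : ℕ} (g : Rn n → ℂ) : L2 n :=
  if h : MemLp g 2 (volume : Measure (Rn n)) then h.toLp g else 0

/-- Multiplication of an `L²` function by the indicator function `1_E`. -/
def indL2 {n : ℕ} (E : Set (Rn n)) (u : L2 n) : L2 n :=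
  if hE : MeasurableSet E then MemLp.toLp (E.indicator u) ((Lp.memLp u).indicator hE) else 0

/-- `f` is a compactly supported continuous function on `(0,∞) × ℝⁿ`. -/
def CcOnPos (n : ℕ) (f : ℝ → Rn n → ℂ) : Prop :=
  Continuous (Function.uncurry f) ∧ HasCompactSupport (Function.uncurry f) ∧
    tsupport (Function.uncurry f) ⊆ Ioi (0:ℝ) ×ˢ (univ : Set (Rn n))

/-- Distance between two sets in `ℝⁿ`. -/
def setDist {n : ℕ} (E F : Set (Rn n)) : ℝ := sInf (Set.image2 dist E F)

/-- The family `(T_t)_{t>0}` satisfies (Gaffney-Davies) off-diagonal estimates of order `M`,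
with homogeneity `m` and constant `C₀`. -/
def OffDiag (n : ℕ) (T : ℝ → (L2 n →L[ℂ] L2 n)) (M : ℝ) (m : ℕ) (C₀ : ℝ) : Prop :=
  ∀ E F : Set (Rn n), MeasurableSet E → MeasurableSet F → ∀ t : ℝ, 0 < t → ∀ u : L2 n,
    ‖indL2 E (T t (indL2 F u))‖ ≤ C₀ * (1 + setDist E F ^ (m:ℝ) / t) ^ (-M) * ‖indL2 F u‖

/-- The annuli `C_0(x,r) = B(x,r)`, `C_j(x,r) = B(x,2ʲr) \\ B(x,2^{j-1}r)` for `j ≥ 1`. -/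
def Cann {n : ℕ} (j : ℕ) (x : Rn n) (r : ℝ) : Set (Rn n) :=
  if j = 0 then ball x r else ball x (2^j * r) \ ball x (2^(j-1) * r)

section Aux

variable {n : ℕ}

lemma indL2_coeFn {E : Set (Rn n)} (hE : MeasurableSet E) (u : L2 n) :
    (indL2 E u : Rn n → ℂ) =ᵐ[volume] E.indicator u := by
  rw [indL2, dif_pos hE]
  exact MemLp.coeFn_toLp _

lemma ennnorm_L2 (u : L2 n) :
    (‖u‖₊ : ℝ≥0∞) = eLpNorm (u : Rn n → ℂ) 2 volume := by
  rw [Lp.nnnorm_def, ENNReal.coe_toNNReal (Lp.eLpNorm_ne_top u)]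

lemma eLpNorm_two_sq (g : Rn n → ℂ) :
    eLpNorm g 2 volume ^ (2:ℕ) = ∫⁻ y, (‖g y‖₊ : ℝ≥0∞) ^ (2:ℕ) := by
  rw [eLpNorm_eq_lintegral_rpow_enorm_toReal (by norm_num) (by norm_num)]
  rw [← ENNReal.rpow_natCast _ 2, ← ENNReal.rpow_mul]
  norm_num
  rfl

lemma ennnorm_indL2_sq {E : Set (Rn n)} (hE : MeasurableSet E) (u : L2 n) :
    (‖indL2 E u‖₊ : ℝ≥0∞) ^ (2:ℕ) = ∫⁻ y in E, (‖u y‖₊ : ℝ≥0∞) ^ (2:ℕ) := by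
  rw [ennnorm_L2, eLpNorm_congr_ae (indL2_coeFn hE u), eLpNorm_two_sq,
    ← lintegral_indicator hE]
  refine lintegral_congr fun y => ?_
  by_cases hy : y ∈ E <;> simp [Set.indicator_of_mem, Set.indicator_of_notMem, hy]

lemma norm_indL2_le (E : Set (Rn n)) (u : L2 n) : ‖indL2 E u‖ ≤ ‖u‖ := by
  by_cases hE : MeasurableSet E
  · rw [Lp.norm_def, Lp.norm_def]
    refine ENNReal.toReal_mono (Lp.eLpNorm_ne_top u) ?_
    rw [eLpNorm_congr_ae (indL2_coeFn hE u)]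
    refine eLpNorm_mono_ae (Filter.Eventually.of_forall fun y => ?_)
    by_cases hy : y ∈ E <;>
      simp [Set.indicator_of_mem, Set.indicator_of_notMem, hy]
  · rw [indL2, dif_neg hE]
    simp

lemma norm_indL2_mono {E F : Set (Rn n)} (hE : MeasurableSet E) (hF : MeasurableSet F)
    (hEF : E ⊆ F) (u : L2 n) : ‖indL2 E u‖ ≤ ‖indL2 F u‖ := by
  rw [Lp.norm_def, Lp.norm_def]
  refine ENNReal.toReal_mono (Lp.eLpNorm_ne_top _) ?_
  rw [eLpNorm_congr_ae (indL2_coeFn hE u), eLpNorm_congr_ae (indL2_coeFn hF u)]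
  refine eLpNorm_mono_ae (Filter.Eventually.of_forall fun y => ?_)
  by_cases hy : y ∈ E
  · rw [Set.indicator_of_mem hy, Set.indicator_of_mem (hEF hy)]
  · rw [Set.indicator_of_notMem hy]
    simp

/-- `indL2 E` as a continuous linear map. -/
def indCLM (E : Set (Rn n)) : L2 n →L[ℂ] L2 n :=
  LinearMap.mkContinuous
    { toFun := indL2 E
      map_add' := by
        intro u v
        by_cases hE : MeasurableSet E
        · simp only [indL2, dif_pos hE]
          rw [← MemLp.toLp_add]
          refine MemLp.toLp_congr _ _ ?_
          filter_upwards [Lp.coeFn_add u v] with y hy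
          by_cases hyE : y ∈ E
          · simpa [Set.indicator_of_mem hyE] using hy
          · simp [Set.indicator_of_notMem hyE]
        · simp [indL2, dif_neg hE]
      map_smul' := by
        intro c u
        by_cases hE : MeasurableSet E
        · simp only [indL2, dif_pos hE, RingHom.id_apply]
          rw [← MemLp.toLp_const_smul]
          refine MemLp.toLp_congr _ _ ?_
          filter_upwards [Lp.coeFn_smul c u] with y hy
          by_cases hyE : y ∈ E
          · simpa [Set.indicator_of_mem hyE] using hy
          · simp [Set.indicator_of_notMem hyE]
        · simp [indL2, dif_neg hE] }
    1 (fun u => by simpa using norm_indL2_le E u)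

@[simp] lemma indCLM_apply (E : Set (Rn n)) (u : L2 n) : indCLM E u = indL2 E u := rfl

@[simp] lemma indL2_zero (E : Set (Rn n)) : indL2 E (0 : L2 n) = 0 := by
  rw [← indCLM_apply, map_zero]

lemma indL2_real_smul (E : Set (Rn n)) (c : ℝ) (u : L2 n) :
    indL2 E (c • u) = c • indL2 E u := by
  rw [← indCLM_apply, (indCLM E).map_smul_of_tower c u, indCLM_apply]

lemma ennnorm_indL2_integral_le {E : Set (Rn n)} {ι : Type*} [MeasurableSpace ι]
    (ν : Measure ι) (g : ι → L2 n) :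
    (‖indL2 E (∫ s, g s ∂ν)‖₊ : ℝ≥0∞) ≤ ∫⁻ s, (‖indL2 E (g s)‖₊ : ℝ≥0∞) ∂ν := by
  by_cases hg : Integrable g ν
  · have h : indL2 E (∫ s, g s ∂ν) = ∫ s, indL2 E (g s) ∂ν := by
      rw [← indCLM_apply, ← (indCLM (n := n) E).integral_comp_comm hg]
      simp
    rw [h]
    exact enorm_integral_le_lintegral_enorm _
  · rw [integral_undef hg, indL2_zero]
    simp

lemma le_setDist {E F : Set (Rn n)} (hE : E.Nonempty) (hF : F.Nonempty) {D : ℝ}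
    (h : ∀ p ∈ E, ∀ q ∈ F, D ≤ dist p q) : D ≤ setDist E F := by
  refine le_csInf (Set.Nonempty.image2 (f := dist) hE hF) ?_
  rintro d ⟨p, hp, q, hq, rfl⟩
  exact h p hp q hq

lemma cann_nonempty (hn : 1 ≤ n) (x : Rn n) {j : ℕ} (hj : 1 ≤ j) {r : ℝ} (hr : 0 < r) :
    (Cann j x r).Nonempty := by
  have hj0 : j ≠ 0 := Nat.one_le_iff_ne_zero.mp hj
  rw [Cann, if_neg hj0]
  set e : Rn n := EuclideanSpace.single (⟨0, hn⟩ : Fin n) (1 : ℝ) with he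
  have hne : ‖e‖ = 1 := by
    rw [he, EuclideanSpace.norm_single]
    norm_num
  refine ⟨x + ((2:ℝ) ^ (j - 1) * r) • e, ?_, ?_⟩
  · rw [mem_ball, dist_eq_norm, add_sub_cancel_left, norm_smul, hne, mul_one,
      Real.norm_eq_abs, abs_of_nonneg (by positivity)]
    have h2 : (2:ℝ) ^ (j - 1) < 2 ^ j := by
      refine pow_lt_pow_right₀ one_lt_two ?_
      omega
    nlinarith
  · rw [mem_ball, dist_eq_norm, add_sub_cancel_left, norm_smul, hne, mul_one,
      Real.norm_eq_abs, abs_of_nonneg (by positivity)]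
    exact lt_irrefl _

lemma memℒp_slice {f : ℝ → Rn n → ℂ} (hf : CcOnPos n f) (s : ℝ) :
    MemLp (f s) 2 (volume : Measure (Rn n)) := by
  obtain ⟨hc, hcs, -⟩ := hf
  have hfs : Continuous (f s) := hc.comp (Continuous.prodMk_right s)
  have hsupp : HasCompactSupport (f s) := by
    have : Function.support (f s) ⊆ Prod.snd '' tsupport (Function.uncurry f) := by
      intro y hy
      exact ⟨(s, y), subset_tsupport _ hy, rfl⟩
    refine IsCompact.of_isClosed_subset (hcs.image continuous_snd) isClosed_closure ?_
    refine closure_minimal this ?_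
    exact (hcs.image continuous_snd).isClosed
  exact hfs.memLp_of_hasCompactSupport hsupp

lemma toL2_coeFn {g : Rn n → ℂ} (hg : MemLp g 2 (volume : Measure (Rn n))) :
    (toL2 g : Rn n → ℂ) =ᵐ[volume] g := by
  rw [toL2, dif_pos hg]
  exact hg.coeFn_toLp

lemma ennnorm_indL2_toL2_sq {E : Set (Rn n)} (hE : MeasurableSet E) {g : Rn n → ℂ}
    (hg : MemLp g 2 (volume : Measure (Rn n))) :
    (‖indL2 E (toL2 g)‖₊ : ℝ≥0∞) ^ (2:ℕ) = ∫⁻ y in E, (‖g y‖₊ : ℝ≥0∞) ^ (2:ℕ) := by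
  rw [ennnorm_indL2_sq hE]
  refine lintegral_congr_ae (ae_restrict_of_ae ?_)
  filter_upwards [toL2_coeFn hg] with y hy
  rw [hy]

lemma key_bound {m : ℕ} (hm : 1 ≤ m) {M C₀ : ℝ} (hM : 1 ≤ M) {Q : ℝ → (L2 n →L[ℂ] L2 n)}
    (hod : OffDiag n (fun t => t • Q t) M m C₀) (hn : 1 ≤ n)
    (x : Rn n) {j : ℕ} (hj : 1 ≤ j) {t s : ℝ} (ht : 0 < t) (hs : s ∈ Ioo (t/2) t) (u : L2 n) :
    ‖indL2 (ball x (t ^ ((m:ℝ)⁻¹))) (Q (t - s) (indL2 (Cann j x (4 * s ^ ((m:ℝ)⁻¹))) u))‖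
      ≤ (|C₀| + 1) * 2 ^ ((m:ℝ) * M) * 2 ^ (-((j:ℝ) * (m:ℝ) * M)) * t⁻¹ *
        ‖indL2 (Cann j x (4 * s ^ ((m:ℝ)⁻¹))) u‖ := by
  have hm0 : (0:ℝ) < (m:ℝ) := by exact_mod_cast hm
  have hminv : (0:ℝ) ≤ (m:ℝ)⁻¹ := by positivity
  have hs0 : 0 < s := lt_of_le_of_lt (by linarith [half_pos ht] : (0:ℝ) ≤ t/2) hs.1
  set τ : ℝ := t - s with hτdef
  have hτ : 0 < τ := by simp only [hτdef]; linarith [hs.2]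
  have hτt : τ < t / 2 := by simp only [hτdef]; linarith [hs.1]
  set T : ℝ := t ^ ((m:ℝ)⁻¹) with hTdef
  have hT : 0 < T := Real.rpow_pos_of_pos ht _
  set r : ℝ := 4 * s ^ ((m:ℝ)⁻¹) with hrdef
  have hr : 0 < r := by
    have := Real.rpow_pos_of_pos hs0 ((m:ℝ)⁻¹)
    simp only [hrdef]; linarith
  set E : Set (Rn n) := ball x T with hEdef
  set F : Set (Rn n) := Cann j x r with hFdef
  have hj0 : j ≠ 0 := Nat.one_le_iff_ne_zero.mp hj
  have hEm : MeasurableSet E := measurableSet_ball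
  have hFm : MeasurableSet F := by
    rw [hFdef, Cann, if_neg hj0]
    exact measurableSet_ball.diff measurableSet_ball
  -- the `s^(1/m)` lower bound
  have hsT : T / 2 ≤ s ^ ((m:ℝ)⁻¹) := by
    have h1 : (t/2) ^ ((m:ℝ)⁻¹) ≤ s ^ ((m:ℝ)⁻¹) :=
      Real.rpow_le_rpow (by linarith) hs.1.le hminv
    have h2 : (t/2) ^ ((m:ℝ)⁻¹) = T / 2 ^ ((m:ℝ)⁻¹) := by
      rw [Real.div_rpow ht.le (by norm_num), hTdef]
    have h3 : (2:ℝ) ^ ((m:ℝ)⁻¹) ≤ 2 := by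
      calc (2:ℝ) ^ ((m:ℝ)⁻¹) ≤ 2 ^ (1:ℝ) := by
            refine Real.rpow_le_rpow_of_exponent_le one_le_two ?_
            rw [inv_le_one_iff₀]
            right; exact_mod_cast hm
        _ = 2 := Real.rpow_one 2
    have h4 : (0:ℝ) < 2 ^ ((m:ℝ)⁻¹) := Real.rpow_pos_of_pos two_pos _
    calc T / 2 ≤ T / 2 ^ ((m:ℝ)⁻¹) := by
          apply div_le_div_of_nonneg_left hT.le h4 h3
      _ = (t/2) ^ ((m:ℝ)⁻¹) := h2.symm
      _ ≤ s ^ ((m:ℝ)⁻¹) := h1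
  -- distance lower bound
  set D : ℝ := 2 ^ ((j:ℝ) - 1) * T with hDdef
  have h2jm1 : (0:ℝ) < 2 ^ ((j:ℝ) - 1) := Real.rpow_pos_of_pos two_pos _
  have hD0 : 0 < D := by positivity
  have h2j1 : (1:ℝ) ≤ 2 ^ ((j:ℝ) - 1) := by
    calc (1:ℝ) = 2 ^ (0:ℝ) := (Real.rpow_zero 2).symm
      _ ≤ 2 ^ ((j:ℝ) - 1) := by
          refine Real.rpow_le_rpow_of_exponent_le one_le_two ?_
          have : (1:ℝ) ≤ (j:ℝ) := by exact_mod_cast hj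
          linarith
  have hD : D ≤ setDist E F := by
    refine le_setDist (nonempty_ball.mpr hT) (cann_nonempty hn x hj hr) ?_
    intro p hp q hq
    rw [Cann, if_neg hj0] at hq
    have hq2 : 2 ^ (j-1) * r ≤ dist q x := le_of_not_gt (fun h => hq.2 (mem_ball.mpr h))
    have hpow : (2:ℝ) ^ (j-1) = 2 ^ ((j:ℝ) - 1) := by
      rw [← Real.rpow_natCast 2 (j-1)]
      congr 1
      rw [Nat.cast_sub hj, Nat.cast_one]
    have hq3 : 2 ^ ((j:ℝ) - 1) * (4 * s ^ ((m:ℝ)⁻¹)) ≤ dist q x := by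
      rw [← hpow]; exact hq2
    have hp2 : dist p x < T := mem_ball.mp hp
    have htri : dist q x ≤ dist q p + dist p x := dist_triangle q p x
    have hmul : 2 ^ ((j:ℝ) - 1) * (4 * (T/2)) ≤ 2 ^ ((j:ℝ) - 1) * (4 * s ^ ((m:ℝ)⁻¹)) := by
      have : 4 * (T/2) ≤ 4 * s ^ ((m:ℝ)⁻¹) := by linarith
      exact mul_le_mul_of_nonneg_left this h2jm1.le
    have hdpq : dist p q = dist q p := dist_comm p q
    rw [hDdef, hdpq]
    nlinarith [h2j1, hT]
  -- apply the off-diagonal estimate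
  have hOD := hod E F hEm hFm τ hτ u
  simp only [ContinuousLinearMap.smul_apply] at hOD
  rw [indL2_real_smul, norm_smul, Real.norm_eq_abs, abs_of_pos hτ] at hOD
  set N : ℝ := ‖indL2 F u‖ with hNdef
  have hN0 : 0 ≤ N := norm_nonneg _
  set dEF : ℝ := setDist E F with hdEF
  have hdEF0 : 0 < dEF := lt_of_lt_of_le hD0 hD
  have hA0 : (0:ℝ) < (1 + dEF ^ (m:ℝ) / τ) ^ (-M) := by
    apply Real.rpow_pos_of_pos
    have : 0 ≤ dEF ^ (m:ℝ) / τ := by positivity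
    linarith
  -- bound the off-diagonal factor
  have hDm : 0 < D ^ (m:ℝ) := Real.rpow_pos_of_pos hD0 _
  have hA1 : (1 + dEF ^ (m:ℝ) / τ) ^ (-M) ≤ (D ^ (m:ℝ) / τ) ^ (-M) := by
    refine Real.rpow_le_rpow_of_nonpos (by positivity) ?_ (by linarith)
    have h1 : D ^ (m:ℝ) ≤ dEF ^ (m:ℝ) := Real.rpow_le_rpow hD0.le hD (by positivity)
    have h2 : D ^ (m:ℝ) / τ ≤ dEF ^ (m:ℝ) / τ := by gcongr
    linarith
  have hA2 : (D ^ (m:ℝ) / τ) ^ (-M) = (D ^ (m:ℝ)) ^ (-M) * τ ^ M := by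
    rw [Real.div_rpow (Real.rpow_nonneg hD0.le _) hτ.le, Real.rpow_neg hτ.le,
      div_eq_mul_inv, inv_inv]
  have hDmval : D ^ (m:ℝ) = 2 ^ (((j:ℝ) - 1) * (m:ℝ)) * t := by
    rw [hDdef, Real.mul_rpow h2jm1.le hT.le, ← Real.rpow_mul (by norm_num : (0:ℝ) ≤ 2),
      hTdef, ← Real.rpow_mul ht.le, inv_mul_cancel₀ (ne_of_gt hm0), Real.rpow_one]
  have hA3 : (D ^ (m:ℝ)) ^ (-M) = 2 ^ (-(((j:ℝ) - 1) * (m:ℝ) * M)) * t ^ (-M) := by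
    rw [hDmval, Real.mul_rpow (Real.rpow_nonneg (by norm_num) _) ht.le,
      ← Real.rpow_mul (by norm_num : (0:ℝ) ≤ 2)]
    have he : (((j:ℝ) - 1) * (m:ℝ)) * (-M) = -(((j:ℝ) - 1) * (m:ℝ) * M) := by ring
    rw [he]
  have h2split : (2:ℝ) ^ (-(((j:ℝ) - 1) * (m:ℝ) * M))
      = 2 ^ ((m:ℝ) * M) * 2 ^ (-((j:ℝ) * (m:ℝ) * M)) := by
    rw [show -(((j:ℝ) - 1) * (m:ℝ) * M) = (m:ℝ) * M + -((j:ℝ) * (m:ℝ) * M) by ring,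
      Real.rpow_add two_pos]
  have hτM : τ ^ M * τ⁻¹ ≤ t ^ (M - 1) := by
    have h1 : τ ^ M * τ⁻¹ = τ ^ (M - 1) := by
      rw [← Real.rpow_neg_one τ, ← Real.rpow_add hτ, sub_eq_add_neg]
    rw [h1]
    exact Real.rpow_le_rpow hτ.le (by linarith) (by linarith)
  have hC1 : C₀ ≤ |C₀| + 1 := by
    have := le_abs_self C₀
    linarith
  have htM : 0 ≤ t ^ (-M) := Real.rpow_nonneg ht.le _
  have h2a : (0:ℝ) ≤ 2 ^ ((m:ℝ) * M) := Real.rpow_nonneg (by norm_num) _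
  have h2b : (0:ℝ) ≤ 2 ^ (-((j:ℝ) * (m:ℝ) * M)) := Real.rpow_nonneg (by norm_num) _
  have hτM0 : 0 ≤ τ ^ M := Real.rpow_nonneg hτ.le _
  calc ‖indL2 E (Q τ (indL2 F u))‖
      = τ⁻¹ * (τ * ‖indL2 E (Q τ (indL2 F u))‖) :=
        (inv_mul_cancel_left₀ (ne_of_gt hτ) _).symm
    _ ≤ τ⁻¹ * (C₀ * (1 + dEF ^ (m:ℝ) / τ) ^ (-M) * N) := by
        refine mul_le_mul_of_nonneg_left ?_ (inv_nonneg.mpr hτ.le)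
        exact hOD
    _ ≤ τ⁻¹ * ((|C₀| + 1) * ((D ^ (m:ℝ) / τ) ^ (-M)) * N) := by
        refine mul_le_mul_of_nonneg_left ?_ (inv_nonneg.mpr hτ.le)
        refine mul_le_mul_of_nonneg_right ?_ hN0
        exact mul_le_mul hC1 hA1 hA0.le (by positivity)
    _ = (|C₀| + 1) * (2 ^ ((m:ℝ) * M) * 2 ^ (-((j:ℝ) * (m:ℝ) * M)) * t ^ (-M))
          * (τ ^ M * τ⁻¹) * N := by
        rw [hA2, hA3, h2split]
        ring
    _ ≤ (|C₀| + 1) * (2 ^ ((m:ℝ) * M) * 2 ^ (-((j:ℝ) * (m:ℝ) * M)) * t ^ (-M))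
          * t ^ (M - 1) * N := by
        refine mul_le_mul_of_nonneg_right ?_ hN0
        refine mul_le_mul_of_nonneg_left hτM ?_
        positivity
    _ = (|C₀| + 1) * 2 ^ ((m:ℝ) * M) * 2 ^ (-((j:ℝ) * (m:ℝ) * M)) * t⁻¹ * N := by
        have h1 : t ^ (-M) * t ^ (M - 1) = t⁻¹ := by
          rw [← Real.rpow_add ht, ← Real.rpow_neg_one t]
          congr 1
          ring
        calc (|C₀| + 1) * (2 ^ ((m:ℝ) * M) * 2 ^ (-((j:ℝ) * (m:ℝ) * M)) * t ^ (-M))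
              * t ^ (M - 1) * N
            = (|C₀| + 1) * 2 ^ ((m:ℝ) * M) * 2 ^ (-((j:ℝ) * (m:ℝ) * M))
              * (t ^ (-M) * t ^ (M - 1)) * N := by ring
          _ = (|C₀| + 1) * 2 ^ ((m:ℝ) * M) * 2 ^ (-((j:ℝ) * (m:ℝ) * M)) * t⁻¹ * N := by
              rw [h1]

lemma ennreal_pow_half (a : ℝ≥0∞) : (a ^ (2:ℕ)) ^ ((2:ℝ)⁻¹) = a := by
  rw [← ENNReal.rpow_natCast a 2, ← ENNReal.rpow_mul]
  norm_num

lemma ennreal_half_pow (a : ℝ≥0∞) : (a ^ ((2:ℝ)⁻¹)) ^ (2:ℕ) = a := by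
  rw [← ENNReal.rpow_natCast _ 2, ← ENNReal.rpow_mul]
  norm_num

lemma meas_PhiIntegral {m : ℕ} {f : ℝ → Rn n → ℂ} (hf : CcOnPos n f) (x : Rn n) (c : ℝ) :
    Measurable fun s : ℝ =>
      ∫⁻ y in ball x (c * s ^ ((m:ℝ)⁻¹)), (‖f s y‖₊ : ℝ≥0∞) ^ (2:ℕ) := by
  set S : Set (ℝ × Rn n) := {p | dist p.2 x < c * p.1 ^ ((m:ℝ)⁻¹)} with hS
  have hSm : MeasurableSet S := by
    refine measurableSet_lt ?_ ?_
    · exact (continuous_snd.dist continuous_const).measurable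
    · exact (measurable_fst.pow measurable_const).const_mul c
  have hFm : Measurable fun p : ℝ × Rn n =>
      S.indicator (fun q : ℝ × Rn n => (‖f q.1 q.2‖₊ : ℝ≥0∞) ^ (2:ℕ)) p := by
    refine Measurable.indicator ?_ hSm
    have : Measurable fun p : ℝ × Rn n => f p.1 p.2 := hf.1.measurable
    exact (this.nnnorm.coe_nnreal_ennreal).pow_const 2
  have hmain := Measurable.lintegral_prod_right' (ν := (volume : Measure (Rn n)))
      (f := fun p : ℝ × Rn n =>
      S.indicator (fun q : ℝ × Rn n => (‖f q.1 q.2‖₊ : ℝ≥0∞) ^ (2:ℕ)) p) hFm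
  have heq : (fun s : ℝ => ∫⁻ y in ball x (c * s ^ ((m:ℝ)⁻¹)), (‖f s y‖₊ : ℝ≥0∞) ^ (2:ℕ))
      = fun s : ℝ => ∫⁻ y, S.indicator
          (fun q : ℝ × Rn n => (‖f q.1 q.2‖₊ : ℝ≥0∞) ^ (2:ℕ)) (s, y) := by
    funext s
    rw [← lintegral_indicator measurableSet_ball]
    refine lintegral_congr fun y => ?_
    by_cases hy : y ∈ ball x (c * s ^ ((m:ℝ)⁻¹))
    · rw [Set.indicator_of_mem hy, Set.indicator_of_mem (by exact mem_ball.mp hy)]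
    · rw [Set.indicator_of_notMem hy, Set.indicator_of_notMem
        (by exact fun h => hy (mem_ball.mpr h))]
  rw [heq]
  exact hmain

end Aux

/-- Pointwise (in `x`) estimate for the pieces `J_j`, `j ≥ 1`, in the proof of tent space
maximal regularity. -/
theorem Jj_inner_estimate
    (n : ℕ) (hn : 1 ≤ n) (m : ℕ) (hm : 1 ≤ m) (β : ℝ)
    (Q : ℝ → (L2 n →L[ℂ] L2 n)) (M C₀ : ℝ) (hM : 1 ≤ M)
    (hod : OffDiag n (fun t => t • Q t) M m C₀) :
    ∃ C : ℝ, 0 < C ∧ ∀ f : ℝ → Rn n → ℂ, CcOnPos n f → ∀ x : Rn n, ∀ j : ℕ, 1 ≤ j →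
      ∫⁻ t in Ioi (0:ℝ),
          (∫⁻ y in ball x (t ^ ((m:ℝ)⁻¹)),
            (‖(∫ s in Ioo (t/2) t,
                  Q (t - s) (indL2 (Cann j x (4 * s ^ ((m:ℝ)⁻¹))) (toL2 (f s)))) y‖₊ : ℝ≥0∞) ^ 2)
            * ENNReal.ofReal (t ^ (β - (n:ℝ)/(m:ℝ)))
        ≤ ENNReal.ofReal (C * 2 ^ (-2 * (j:ℝ) * (m:ℝ) * M)) *
            ∫⁻ s in Ioi (0:ℝ),
              (‖indL2 (ball x ((2:ℝ) ^ ((j:ℝ) + 2) * s ^ ((m:ℝ)⁻¹)))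
                  (toL2 (f s))‖₊ : ℝ≥0∞) ^ 2 * ENNReal.ofReal (s ^ (β - (n:ℝ)/(m:ℝ))) := by
  have hm0 : (0:ℝ) < (m:ℝ) := by exact_mod_cast hm
  set γ : ℝ := β - (n:ℝ)/(m:ℝ) with hγ
  set K : ℝ := (|C₀| + 1) * 2 ^ ((m:ℝ) * M) with hK
  have h2mM : (0:ℝ) < 2 ^ ((m:ℝ) * M) := Real.rpow_pos_of_pos two_pos _
  have hC0abs : (0:ℝ) < |C₀| + 1 := by positivity
  have hK0 : 0 < K := mul_pos hC0abs h2mM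
  set c₄ : ℝ := max 1 (2 ^ (γ - 1)) with hc₄
  have hc₄1 : (1:ℝ) ≤ c₄ := le_max_left _ _
  have hc₄0 : (0:ℝ) < c₄ := lt_of_lt_of_le one_pos hc₄1
  refine ⟨K ^ 2 * c₄ / 2, by positivity, ?_⟩
  intro f hf x j hj
  have hj0 : j ≠ 0 := Nat.one_le_iff_ne_zero.mp hj
  set a : ℝ := (j:ℝ) * (m:ℝ) * M with ha
  set K2 : ℝ := K * 2 ^ (-a) with hK2
  have h2a : (0:ℝ) < 2 ^ (-a) := Real.rpow_pos_of_pos two_pos _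
  have hK20 : 0 < K2 := mul_pos hK0 h2a
  set R : ℝ → ℝ := fun s => (2:ℝ) ^ ((j:ℝ) + 2) * s ^ ((m:ℝ)⁻¹) with hR
  set Φ : ℝ → ℝ≥0∞ :=
    fun s => ∫⁻ y in ball x (R s), (‖f s y‖₊ : ℝ≥0∞) ^ (2:ℕ) with hΦ
  have hΦm : Measurable Φ := by
    rw [hΦ, hR]
    exact meas_PhiIntegral hf x _
  have hΦeq : ∀ s : ℝ,
      Φ s = (‖indL2 (ball x (R s)) (toL2 (f s))‖₊ : ℝ≥0∞) ^ (2:ℕ) :=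
    fun s => (ennnorm_indL2_toL2_sq measurableSet_ball (memℒp_slice hf s)).symm
  set Φh : ℝ → ℝ≥0∞ :=
    fun s => (‖indL2 (ball x (R s)) (toL2 (f s))‖₊ : ℝ≥0∞) with hΦh
  have hΦhsq : ∀ s, Φh s ^ (2:ℕ) = Φ s := fun s => (hΦeq s).symm
  have hΦhm : Measurable Φh := by
    have h : Φh = fun s => (Φ s) ^ ((2:ℝ)⁻¹) := by
      funext s
      rw [← hΦhsq s, ennreal_pow_half]
    rw [h]
    exact hΦm.pow measurable_const
  -- pointwise-in-t bound
  have hmain : ∀ t ∈ Ioi (0:ℝ),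
      (∫⁻ y in ball x (t ^ ((m:ℝ)⁻¹)),
          (‖(∫ s in Ioo (t/2) t,
              Q (t - s) (indL2 (Cann j x (4 * s ^ ((m:ℝ)⁻¹))) (toL2 (f s)))) y‖₊ : ℝ≥0∞) ^ 2)
        * ENNReal.ofReal (t ^ γ)
      ≤ ENNReal.ofReal (K2 ^ 2 / 2)
          * (ENNReal.ofReal (t ^ (γ - 1)) * ∫⁻ s in Ioo (t/2) t, Φ s) := by
    intro t ht
    rw [mem_Ioi] at ht
    have h3 : ∀ s ∈ Ioo (t/2) t,
        (‖indL2 (ball x (t ^ ((m:ℝ)⁻¹)))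
            (Q (t - s) (indL2 (Cann j x (4 * s ^ ((m:ℝ)⁻¹))) (toL2 (f s))))‖₊ : ℝ≥0∞)
          ≤ ENNReal.ofReal (K2 * t⁻¹) * Φh s := by
      intro s hs
      have hkey := key_bound hm hM hod hn x hj ht hs (toL2 (f s))
      have hrad : (2:ℝ) ^ j * (4 * s ^ ((m:ℝ)⁻¹)) = R s := by
        rw [hR]
        have h1 : (2:ℝ) ^ ((j:ℝ) + 2) = 2 ^ (j:ℝ) * 2 ^ (2:ℝ) := Real.rpow_add two_pos _ _
        have h2 : (2:ℝ) ^ (j:ℝ) = 2 ^ j := Real.rpow_natCast 2 j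
        have h3 : (2:ℝ) ^ (2:ℝ) = 4 := by
          rw [show (2:ℝ) = ((2:ℕ):ℝ) by norm_num, Real.rpow_natCast]
          norm_num
        rw [h1, h2, h3]
        ring
      have hCm : MeasurableSet (Cann j x (4 * s ^ ((m:ℝ)⁻¹))) := by
        rw [Cann, if_neg hj0]
        exact measurableSet_ball.diff measurableSet_ball
      have hsub : Cann j x (4 * s ^ ((m:ℝ)⁻¹)) ⊆ ball x (R s) := by
        rw [Cann, if_neg hj0, ← hrad]
        exact diff_subset
      have hmono : ‖indL2 (Cann j x (4 * s ^ ((m:ℝ)⁻¹))) (toL2 (f s))‖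
          ≤ ‖indL2 (ball x (R s)) (toL2 (f s))‖ :=
        norm_indL2_mono hCm measurableSet_ball hsub _
      have hreal : ‖indL2 (ball x (t ^ ((m:ℝ)⁻¹)))
          (Q (t - s) (indL2 (Cann j x (4 * s ^ ((m:ℝ)⁻¹))) (toL2 (f s))))‖
          ≤ K2 * t⁻¹ * ‖indL2 (ball x (R s)) (toL2 (f s))‖ := by
        refine hkey.trans ?_
        have heqc : (|C₀| + 1) * 2 ^ ((m:ℝ) * M) * 2 ^ (-((j:ℝ) * (m:ℝ) * M)) * t⁻¹
            = K2 * t⁻¹ := by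
          rw [hK2, hK, ha]
        rw [heqc]
        exact mul_le_mul_of_nonneg_left hmono (by positivity)
      calc (‖indL2 (ball x (t ^ ((m:ℝ)⁻¹)))
            (Q (t - s) (indL2 (Cann j x (4 * s ^ ((m:ℝ)⁻¹))) (toL2 (f s))))‖₊ : ℝ≥0∞)
          = ENNReal.ofReal ‖indL2 (ball x (t ^ ((m:ℝ)⁻¹)))
            (Q (t - s) (indL2 (Cann j x (4 * s ^ ((m:ℝ)⁻¹))) (toL2 (f s))))‖ :=
            (ofReal_norm_eq_enorm _).symm
        _ ≤ ENNReal.ofReal (K2 * t⁻¹ * ‖indL2 (ball x (R s)) (toL2 (f s))‖) :=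
            ENNReal.ofReal_le_ofReal hreal
        _ = ENNReal.ofReal (K2 * t⁻¹) * Φh s := by
            rw [ENNReal.ofReal_mul (by positivity), hΦh]
            simp only
            rw [ofReal_norm_eq_enorm]
            rfl
    have h2 : (‖indL2 (ball x (t ^ ((m:ℝ)⁻¹)))
        (∫ s in Ioo (t/2) t,
          Q (t - s) (indL2 (Cann j x (4 * s ^ ((m:ℝ)⁻¹))) (toL2 (f s))))‖₊ : ℝ≥0∞)
        ≤ ENNReal.ofReal (K2 * t⁻¹) * ∫⁻ s in Ioo (t/2) t, Φh s := by
      refine (ennnorm_indL2_integral_le _ _).trans ?_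
      rw [← lintegral_const_mul' _ _ ENNReal.ofReal_ne_top]
      refine lintegral_mono_ae ?_
      rw [ae_restrict_iff' measurableSet_Ioo]
      exact Filter.Eventually.of_forall h3
    have hH : (∫⁻ s in Ioo (t/2) t, Φh s)
        ≤ (∫⁻ s in Ioo (t/2) t, Φ s) ^ ((2:ℝ)⁻¹)
          * (ENNReal.ofReal (t/2)) ^ ((2:ℝ)⁻¹) := by
      have hconj : Real.HolderConjugate 2 2 := Real.HolderConjugate.two_two
      have hh := ENNReal.lintegral_mul_le_Lp_mul_Lq (volume.restrict (Ioo (t/2) t)) hconj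
        hΦhm.aemeasurable (aemeasurable_const (b := (1:ℝ≥0∞)))
      simp only [Pi.mul_apply, mul_one, ENNReal.one_rpow, one_div] at hh
      have hΦh2 : ∀ s : ℝ, Φh s ^ (2:ℝ) = Φ s := by
        intro s
        rw [← hΦhsq s, ← ENNReal.rpow_natCast (Φh s) 2]
        norm_num
      calc (∫⁻ s in Ioo (t/2) t, Φh s)
          ≤ (∫⁻ s in Ioo (t/2) t, Φh s ^ (2:ℝ)) ^ ((2:ℝ)⁻¹)
            * (∫⁻ _ in Ioo (t/2) t, (1:ℝ≥0∞)) ^ ((2:ℝ)⁻¹) := hh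
        _ = (∫⁻ s in Ioo (t/2) t, Φ s) ^ ((2:ℝ)⁻¹)
            * (ENNReal.ofReal (t/2)) ^ ((2:ℝ)⁻¹) := by
            rw [lintegral_congr hΦh2]
            congr 1
            rw [lintegral_one, Measure.restrict_apply MeasurableSet.univ, Set.univ_inter,
              Real.volume_Ioo]
            congr 1
            ring
    have hofr : ENNReal.ofReal (K2 * t⁻¹) ^ (2:ℕ) * ENNReal.ofReal (t/2)
        * ENNReal.ofReal (t ^ γ)
        = ENNReal.ofReal (K2 ^ 2 / 2) * ENNReal.ofReal (t ^ (γ - 1)) := by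
      rw [← ENNReal.ofReal_pow (by positivity), ← ENNReal.ofReal_mul (by positivity),
        ← ENNReal.ofReal_mul (by positivity), ← ENNReal.ofReal_mul (by positivity)]
      congr 1
      have hts : t ^ (γ - 1) = t ^ γ * t⁻¹ := by
        rw [Real.rpow_sub ht, Real.rpow_one, div_eq_mul_inv]
      rw [hts]
      field_simp
    calc (∫⁻ y in ball x (t ^ ((m:ℝ)⁻¹)),
          (‖(∫ s in Ioo (t/2) t,
              Q (t - s) (indL2 (Cann j x (4 * s ^ ((m:ℝ)⁻¹))) (toL2 (f s)))) y‖₊ : ℝ≥0∞) ^ 2)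
        * ENNReal.ofReal (t ^ γ)
        = (‖indL2 (ball x (t ^ ((m:ℝ)⁻¹)))
            (∫ s in Ioo (t/2) t,
              Q (t - s) (indL2 (Cann j x (4 * s ^ ((m:ℝ)⁻¹))) (toL2 (f s))))‖₊ : ℝ≥0∞) ^ (2:ℕ)
          * ENNReal.ofReal (t ^ γ) := by
          rw [ennnorm_indL2_sq measurableSet_ball]
      _ ≤ (ENNReal.ofReal (K2 * t⁻¹) * ∫⁻ s in Ioo (t/2) t, Φh s) ^ (2:ℕ)
          * ENNReal.ofReal (t ^ γ) := by
          exact mul_le_mul_left (pow_le_pow_left₀ (zero_le) h2 2) _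
      _ ≤ (ENNReal.ofReal (K2 * t⁻¹) * ((∫⁻ s in Ioo (t/2) t, Φ s) ^ ((2:ℝ)⁻¹)
            * (ENNReal.ofReal (t/2)) ^ ((2:ℝ)⁻¹))) ^ (2:ℕ)
          * ENNReal.ofReal (t ^ γ) := by
          exact mul_le_mul_left
            (pow_le_pow_left₀ (zero_le) (mul_le_mul_right hH _) 2) _
      _ = (ENNReal.ofReal (K2 * t⁻¹) ^ (2:ℕ) * ENNReal.ofReal (t/2)
            * ENNReal.ofReal (t ^ γ)) * ∫⁻ s in Ioo (t/2) t, Φ s := by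
          rw [mul_pow, mul_pow, ennreal_half_pow, ennreal_half_pow]
          ring
      _ = ENNReal.ofReal (K2 ^ 2 / 2)
          * (ENNReal.ofReal (t ^ (γ - 1)) * ∫⁻ s in Ioo (t/2) t, Φ s) := by
          rw [hofr]
          ring
  -- Tonelli / Fubini part
  have hTon : (∫⁻ t in Ioi (0:ℝ), ENNReal.ofReal (t ^ (γ - 1)) * ∫⁻ s in Ioo (t/2) t, Φ s)
      ≤ ENNReal.ofReal c₄ * ∫⁻ s in Ioi (0:ℝ), Φ s * ENNReal.ofReal (s ^ γ) := by
    set G2 : ℝ → ℝ → ℝ≥0∞ := fun t s =>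
      if 0 < t ∧ t/2 < s ∧ s < t then ENNReal.ofReal (t ^ (γ - 1)) * Φ s else 0 with hG2
    have hG2app : ∀ t s : ℝ, G2 t s
        = if 0 < t ∧ t/2 < s ∧ s < t then ENNReal.ofReal (t ^ (γ - 1)) * Φ s else 0 :=
      fun t s => rfl
    have hG2m : Measurable (Function.uncurry G2) := by
      have hSm : MeasurableSet {p : ℝ × ℝ | 0 < p.1 ∧ p.1/2 < p.2 ∧ p.2 < p.1} := by
        rw [Set.setOf_and, Set.setOf_and]
        refine MeasurableSet.inter ?_ (MeasurableSet.inter ?_ ?_)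
        · exact measurableSet_lt measurable_const measurable_fst
        · exact measurableSet_lt (measurable_fst.div_const 2) measurable_snd
        · exact measurableSet_lt measurable_snd measurable_fst
      have heq2 : Function.uncurry G2 = {p : ℝ × ℝ | 0 < p.1 ∧ p.1/2 < p.2 ∧ p.2 < p.1}.indicator
          (fun p : ℝ × ℝ => ENNReal.ofReal (p.1 ^ (γ - 1)) * Φ p.2) := by
        funext p
        by_cases hp : 0 < p.1 ∧ p.1/2 < p.2 ∧ p.2 < p.1
        · rw [Set.indicator_of_mem
            (show p ∈ {p : ℝ × ℝ | 0 < p.1 ∧ p.1/2 < p.2 ∧ p.2 < p.1} from hp)]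
          show G2 p.1 p.2 = _
          rw [hG2app, if_pos hp]
        · rw [Set.indicator_of_notMem
            (show p ∉ {p : ℝ × ℝ | 0 < p.1 ∧ p.1/2 < p.2 ∧ p.2 < p.1} from hp)]
          show G2 p.1 p.2 = _
          rw [hG2app, if_neg hp]
      rw [heq2]
      refine Measurable.indicator ?_ hSm
      exact ((measurable_fst.pow measurable_const).ennreal_ofReal).mul (hΦm.comp measurable_snd)
    have hrw : (∫⁻ t in Ioi (0:ℝ), ENNReal.ofReal (t ^ (γ - 1)) * ∫⁻ s in Ioo (t/2) t, Φ s)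
        = ∫⁻ t, ∫⁻ s, G2 t s := by
      rw [← lintegral_indicator measurableSet_Ioi]
      refine lintegral_congr fun t => ?_
      by_cases ht : 0 < t
      · rw [Set.indicator_of_mem (mem_Ioi.mpr ht)]
        have hpt : ∀ s : ℝ, G2 t s
            = (Ioo (t/2) t).indicator (fun s => ENNReal.ofReal (t ^ (γ - 1)) * Φ s) s := by
          intro s
          by_cases hs : s ∈ Ioo (t/2) t
          · have hcond : 0 < t ∧ t/2 < s ∧ s < t := ⟨ht, hs.1, hs.2⟩
            rw [Set.indicator_of_mem hs, hG2app, if_pos hcond]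
          · rw [Set.indicator_of_notMem hs, hG2app, if_neg]
            intro hcon
            exact hs ⟨hcon.2.1, hcon.2.2⟩
        rw [lintegral_congr hpt, lintegral_indicator measurableSet_Ioo,
          lintegral_const_mul' _ _ ENNReal.ofReal_ne_top]
      · rw [Set.indicator_of_notMem (by simpa using ht)]
        have hz : ∀ s : ℝ, G2 t s = 0 := by
          intro s
          rw [hG2app, if_neg (fun h => ht h.1)]
        simp only [hz, lintegral_zero]
    rw [hrw, lintegral_lintegral_swap hG2m.aemeasurable]
    have hinner : ∀ s : ℝ, (∫⁻ t, G2 t s)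
        ≤ (Ioi (0:ℝ)).indicator
            (fun s => ENNReal.ofReal c₄ * (Φ s * ENNReal.ofReal (s ^ γ))) s := by
      intro s
      by_cases hs : 0 < s
      · rw [Set.indicator_of_mem (mem_Ioi.mpr hs)]
        have h1 : ∀ t : ℝ, G2 t s
            = (Ioo s (2*s)).indicator (fun t => ENNReal.ofReal (t ^ (γ - 1)) * Φ s) t := by
          intro t
          by_cases hts : t ∈ Ioo s (2*s)
          · have hcond : 0 < t ∧ t/2 < s ∧ s < t :=
              ⟨by linarith [hts.1], by linarith [hts.2], hts.1⟩
            rw [Set.indicator_of_mem hts, hG2app, if_pos hcond]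
          · rw [Set.indicator_of_notMem hts, hG2app, if_neg]
            rintro ⟨ht0, h2ts, hst⟩
            exact hts ⟨hst, by linarith⟩
        calc (∫⁻ t, G2 t s)
            = ∫⁻ t in Ioo s (2*s), ENNReal.ofReal (t ^ (γ - 1)) * Φ s := by
              rw [lintegral_congr h1, lintegral_indicator measurableSet_Ioo]
          _ ≤ ∫⁻ t in Ioo s (2*s), ENNReal.ofReal (c₄ * s ^ (γ - 1)) * Φ s := by
              refine setLIntegral_mono' measurableSet_Ioo fun t hts => ?_
              refine mul_le_mul_left (ENNReal.ofReal_le_ofReal ?_) _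
              rcases le_or_gt 1 γ with hγ1 | hγ1
              · have hb2 : t ^ (γ - 1) ≤ (2*s) ^ (γ - 1) :=
                  Real.rpow_le_rpow (by linarith [hts.1]) hts.2.le (by linarith)
                have hb3 : (2*s) ^ (γ - 1) = 2 ^ (γ - 1) * s ^ (γ - 1) :=
                  Real.mul_rpow (by norm_num) hs.le
                have hb4 : (2:ℝ) ^ (γ - 1) ≤ c₄ := le_max_right _ _
                have hb5 : (0:ℝ) ≤ s ^ (γ - 1) := Real.rpow_nonneg hs.le _
                nlinarith
              · have hb2 : t ^ (γ - 1) ≤ s ^ (γ - 1) :=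
                  Real.rpow_le_rpow_of_nonpos hs hts.1.le (by linarith)
                have hb5 : (0:ℝ) ≤ s ^ (γ - 1) := Real.rpow_nonneg hs.le _
                nlinarith
          _ = ENNReal.ofReal (c₄ * s ^ (γ - 1)) * Φ s * volume (Ioo s (2*s)) :=
              setLIntegral_const _ _
          _ = ENNReal.ofReal c₄ * (Φ s * ENNReal.ofReal (s ^ γ)) := by
              rw [Real.volume_Ioo, show 2*s - s = s by ring]
              have h7 : ENNReal.ofReal (c₄ * s ^ (γ - 1)) * ENNReal.ofReal s
                  = ENNReal.ofReal c₄ * ENNReal.ofReal (s ^ γ) := by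
                rw [← ENNReal.ofReal_mul (by positivity), ← ENNReal.ofReal_mul hc₄0.le]
                congr 1
                rw [Real.rpow_sub hs, Real.rpow_one]
                field_simp
              calc ENNReal.ofReal (c₄ * s ^ (γ - 1)) * Φ s * ENNReal.ofReal s
                  = (ENNReal.ofReal (c₄ * s ^ (γ - 1)) * ENNReal.ofReal s) * Φ s := by ring
                _ = (ENNReal.ofReal c₄ * ENNReal.ofReal (s ^ γ)) * Φ s := by rw [h7]
                _ = ENNReal.ofReal c₄ * (Φ s * ENNReal.ofReal (s ^ γ)) := by ring
      · have hz : ∀ t : ℝ, G2 t s = 0 := by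
          intro t
          rw [hG2]
          simp only
          rw [if_neg]
          rintro ⟨ht0, h2ts, hst⟩
          exact hs (lt_of_le_of_lt (by linarith) h2ts)
        simp only [hz, lintegral_zero]
        exact zero_le
    calc (∫⁻ s, ∫⁻ t, G2 t s)
        ≤ ∫⁻ s, (Ioi (0:ℝ)).indicator
            (fun s => ENNReal.ofReal c₄ * (Φ s * ENNReal.ofReal (s ^ γ))) s :=
          lintegral_mono hinner
      _ = ∫⁻ s in Ioi (0:ℝ), ENNReal.ofReal c₄ * (Φ s * ENNReal.ofReal (s ^ γ)) :=
          lintegral_indicator measurableSet_Ioi _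
      _ = ENNReal.ofReal c₄ * ∫⁻ s in Ioi (0:ℝ), Φ s * ENNReal.ofReal (s ^ γ) :=
          lintegral_const_mul' _ _ ENNReal.ofReal_ne_top
  -- assemble
  have hconstr : ENNReal.ofReal (K2 ^ 2 / 2) * ENNReal.ofReal c₄
      = ENNReal.ofReal (K ^ 2 * c₄ / 2 * 2 ^ (-2 * (j:ℝ) * (m:ℝ) * M)) := by
    rw [← ENNReal.ofReal_mul (by positivity)]
    congr 1
    have h2a2 : (2:ℝ) ^ (-a) * 2 ^ (-a) = 2 ^ (-2 * (j:ℝ) * (m:ℝ) * M) := by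
      rw [← Real.rpow_add two_pos]
      congr 1
      rw [ha]
      ring
    have hx : K2 ^ 2 / 2 * c₄ = K ^ 2 * c₄ / 2 * (2 ^ (-a) * 2 ^ (-a)) := by
      rw [hK2]
      ring
    rw [hx, h2a2]
  calc (∫⁻ t in Ioi (0:ℝ),
        (∫⁻ y in ball x (t ^ ((m:ℝ)⁻¹)),
          (‖(∫ s in Ioo (t/2) t,
              Q (t - s) (indL2 (Cann j x (4 * s ^ ((m:ℝ)⁻¹))) (toL2 (f s)))) y‖₊ : ℝ≥0∞) ^ 2)
          * ENNReal.ofReal (t ^ γ))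
      ≤ ∫⁻ t in Ioi (0:ℝ), ENNReal.ofReal (K2 ^ 2 / 2)
          * (ENNReal.ofReal (t ^ (γ - 1)) * ∫⁻ s in Ioo (t/2) t, Φ s) := by
        refine lintegral_mono_ae ?_
        rw [ae_restrict_iff' measurableSet_Ioi]
        exact Filter.Eventually.of_forall hmain
    _ = ENNReal.ofReal (K2 ^ 2 / 2)
        * ∫⁻ t in Ioi (0:ℝ), ENNReal.ofReal (t ^ (γ - 1)) * ∫⁻ s in Ioo (t/2) t, Φ s :=
        lintegral_const_mul' _ _ ENNReal.ofReal_ne_top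
    _ ≤ ENNReal.ofReal (K2 ^ 2 / 2)
        * (ENNReal.ofReal c₄ * ∫⁻ s in Ioi (0:ℝ), Φ s * ENNReal.ofReal (s ^ γ)) :=
        mul_le_mul_right hTon _
    _ = ENNReal.ofReal (K ^ 2 * c₄ / 2 * 2 ^ (-2 * (j:ℝ) * (m:ℝ) * M))
        * ∫⁻ s in Ioi (0:ℝ), Φ s * ENNReal.ofReal (s ^ γ) := by
        rw [← mul_assoc, hconstr]
    _ = ENNReal.ofReal (K ^ 2 * c₄ / 2 * 2 ^ (-2 * (j:ℝ) * (m:ℝ) * M)) *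
          ∫⁻ s in Ioi (0:ℝ),
            (‖indL2 (ball x ((2:ℝ) ^ ((j:ℝ) + 2) * s ^ ((m:ℝ)⁻¹)))
                (toL2 (f s))‖₊ : ℝ≥0∞) ^ 2 * ENNReal.ofReal (s ^ γ) := by
        congr 1
        refine lintegral_congr fun s => ?_
        rw [hΦeq s, hR]
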